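/- Let I be a nonzero ideal of O_K. If there exists a rational integer n with n − θ ∈ I, then I is not divisible by two distinct prime ideals of the same absolute norm; moreover P₂² does not divide I and P₃² does not divide I, where P₂ and P₃ are the unique prime ideals of O_K lying above 2 and 3 respectively. -/

import Mathlib

open Polynomial NumberField

lemma ratCube (b : ℚ) : b ^ 3 ≠ 2 := by
  intro h
  have hnum : b.num ^ 3 = 2 * (b.den : ℤ) ^ 3 := by
    rw [← Rat.num_div_den b] at h
    field_simp at h
    rw [mul_comm]; exact_mod_cast h
  have h2 : (2 : ℤ) ∣ b.num :=
    Int.Prime.dvd_pow' Nat.prime_two ⟨(b.den:ℤ)^3, hnum⟩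
  obtain ⟨m, hm⟩ := h2
  have hden : (2:ℤ) ∣ (b.den : ℤ) := by
    have hc : (2:ℤ) ∣ (b.den:ℤ)^3 := by
      refine ⟨2 * m^3, ?_⟩
      have h8 : 8 * m ^ 3 = 2 * (b.den:ℤ)^3 := by rw [← hnum, hm]; ring
      linarith
    exact Int.Prime.dvd_pow' Nat.prime_two hc
  have hd2 : (2:ℕ) ∣ b.den := by exact_mod_cast hden
  have hn2 : (2:ℕ) ∣ b.num.natAbs := by
    rw [← Int.natAbs_natCast 2]; exact Int.natAbs_dvd_natAbs.mpr ⟨m, hm⟩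
  have : (2:ℕ) ∣ 1 := b.reduced ▸ Nat.dvd_gcd hn2 hd2
  norm_num at this

lemma X3irr : Irreducible (X ^ 3 - C (2:ℚ)) :=
  X_pow_sub_C_irreducible_of_prime Nat.prime_three (fun b => ratCube b)

section
variable (K : Type*) [Field K] [NumberField K]

/-- power basis from a generator -/
noncomputable def pbOf (x : K) (h : Algebra.adjoin ℚ {x} = ⊤) : PowerBasis ℚ K :=
  (Algebra.adjoin.powerBasis (IsIntegral.of_finite ℚ x)).map <|
    (Subalgebra.equivOfEq _ _ h).trans Subalgebra.topEquiv

@[simp] lemma pbOf_gen (x : K) (h : Algebra.adjoin ℚ {x} = ⊤) : (pbOf K x h).gen = x := rfl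

lemma pbOf_dim (x : K) (h : Algebra.adjoin ℚ {x} = ⊤) :
    (pbOf K x h).dim = (minpoly ℚ x).natDegree := rfl

variable {K}
variable (θ' : K) (h3 : θ' ^ 3 = 2) (hgen : Algebra.adjoin ℚ {θ'} = ⊤)

include h3 in
lemma minpolyθ : minpoly ℚ θ' = X ^ 3 - C 2 := by
  have hroot : aeval θ' (X ^ 3 - C (2:ℚ)) = 0 := by simp [h3]
  have hmon : (X ^ 3 - C (2:ℚ)).Monic := monic_X_pow_sub_C _ (by norm_num)
  exact (minpoly.eq_of_irreducible_of_monic X3irr hroot hmon).symm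

include h3 hgen in
lemma finrankK : Module.finrank ℚ K = 3 := by
  rw [(pbOf K θ' hgen).finrank, pbOf_dim, minpolyθ θ' h3]
  compute_degree!

include h3 hgen in
lemma normNsub (n : ℤ) : Algebra.norm ℚ ((n : K) - θ') = (n:ℚ)^3 - 2 := by
  set β : K := (n : K) - θ' with hβ
  have hθβ : θ' ∈ Algebra.adjoin ℚ {β} := by
    have h1 : β ∈ Algebra.adjoin ℚ {β} := Algebra.subset_adjoin rfl
    have h2 : ((n:ℤ) : K) ∈ Algebra.adjoin ℚ {β} := intCast_mem _ n
    have : (n : K) - β ∈ Algebra.adjoin ℚ {β} := Subalgebra.sub_mem _ h2 h1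
    simpa [hβ] using this
  let pb : PowerBasis ℚ K := pbOf K β (PowerBasis.adjoin_eq_top_of_gen_mem_adjoin (B := pbOf K θ' hgen) hθβ)
  have hpbgen : pb.gen = β := rfl
  have hdim : pb.dim = (minpoly ℚ β).natDegree := rfl
  have hfin : (minpoly ℚ β).natDegree = 3 := by
    rw [← hdim, ← pb.finrank, finrankK θ' h3 hgen]
  set q : ℚ[X] := X^3 - C (3*(n:ℚ)) * X^2 + C (3*(n:ℚ)^2) * X - C ((n:ℚ)^3 - 2) with hq
  have hq0 : aeval β q = 0 := by
    simp only [hq, map_add, map_sub, map_mul, map_pow, aeval_X, aeval_C, hβ,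
      map_intCast, map_ofNat]
    push_cast
    linear_combination (-1 : K) * h3
  have hqmonic : q.Monic := by
    unfold q; monicity!
  have hqdeg : q.natDegree = 3 := by unfold q; compute_degree!
  have hdvd : minpoly ℚ β ∣ q := minpoly.dvd ℚ β hq0
  have hqeq : minpoly ℚ β = q := by
    obtain ⟨c, hc⟩ := hdvd
    have hmb : (minpoly ℚ β).Monic := minpoly.monic (IsIntegral.of_finite ℚ β)
    have hc0 : c ≠ 0 := by
      rintro rfl; rw [mul_zero] at hc; exact hqmonic.ne_zero hc
    have hdegc : c.natDegree = 0 := by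
      have := natDegree_mul hmb.ne_zero hc0
      rw [← hc, hqdeg, hfin] at this
      omega
    have hcl : c.leadingCoeff = 1 := by
      have h1 := congrArg leadingCoeff hc
      rw [leadingCoeff_mul, hmb.leadingCoeff, one_mul] at h1
      rw [← h1]; exact hqmonic.leadingCoeff
    have hcC : c = C (c.coeff 0) := eq_C_of_natDegree_eq_zero hdegc
    rw [Polynomial.leadingCoeff, hdegc] at hcl
    rw [hc, hcC, hcl, map_one, mul_one]
  have := Algebra.PowerBasis.norm_gen_eq_coeff_zero_minpoly pb
  rw [hpbgen, hqeq] at this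
  rw [this]
  have hdim3 : pb.dim = 3 := by rw [hdim, hfin]
  rw [hdim3]
  simp only [hq, coeff_sub, coeff_add, coeff_C_mul, coeff_X_pow, coeff_X_zero, coeff_C_zero]
  norm_num
end

section
variable {K : Type*} [Field K] [NumberField K]
variable (θ : 𝓞 K) (hθ : θ ^ 3 = 2) (hgen : Algebra.adjoin ℚ {(θ : K)} = ⊤)

include hθ in
lemma coe3 : (algebraMap (𝓞 K) K θ) ^ 3 = 2 := by
  rw [← map_pow, hθ, map_ofNat]

include hθ hgen in
lemma normZ (n : ℤ) : Algebra.norm ℤ ((n : 𝓞 K) - θ) = n ^ 3 - 2 := by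
  have h1 := Algebra.coe_norm_int ((n : 𝓞 K) - θ)
  simp only [map_sub, map_intCast] at h1
  rw [normNsub _ (coe3 θ hθ) hgen] at h1
  exact_mod_cast h1

include hθ hgen in
lemma absNormSpan (n : ℤ) :
    Ideal.absNorm (Ideal.span {(n : 𝓞 K) - θ}) = (n ^ 3 - 2).natAbs := by
  rw [Ideal.absNorm_span_singleton, normZ θ hθ hgen]

include hθ hgen in
lemma discrθ : Algebra.discr ℚ (pbOf K _ hgen).basis = -108 := by
  have h3 := coe3 θ hθ
  have hsep : Algebra.IsSeparable ℚ K := inferInstance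
  rw [Algebra.discr_powerBasis_eq_norm, finrankK _ h3 hgen]
  rw [pbOf_gen, minpolyθ _ h3]
  have hder : derivative (X ^ 3 - C (2:ℚ)) = C 3 * X ^ 2 := by
    simp [derivative_X_pow]
    rw [← C_1, ← C_add]; norm_num
  rw [hder]
  have haev : aeval (algebraMap (𝓞 K) K θ) (C (3:ℚ) * X ^ 2) =
      algebraMap ℚ K 3 * (algebraMap (𝓞 K) K θ) ^ 2 := by simp
  rw [haev, map_mul, map_pow, Algebra.norm_algebraMap,
      finrankK _ h3 hgen]
  have hnθ : Algebra.norm ℚ (algebraMap (𝓞 K) K θ) = 2 := by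
    have h0 := normNsub (K := K) (algebraMap (𝓞 K) K θ) h3 hgen 0
    have hneg : algebraMap (𝓞 K) K θ =
        algebraMap ℚ K (-1) * (((0:ℤ) : K) - algebraMap (𝓞 K) K θ) := by
      push_cast; ring
    rw [hneg, map_mul, h0, Algebra.norm_algebraMap, finrankK _ h3 hgen]
    norm_num
  rw [hnθ]
  norm_num

include hθ hgen in
lemma mem108 (x : 𝓞 K) : (108 : 𝓞 K) * x ∈ Algebra.adjoin ℤ ({θ} : Set (𝓞 K)) := by
  have h3 := coe3 θ hθ
  have hint : IsIntegral ℤ (pbOf K _ hgen).gen := by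
    rw [pbOf_gen]; exact RingOfIntegers.isIntegral_coe θ
  have hz : IsIntegral ℤ (algebraMap (𝓞 K) K x) := RingOfIntegers.isIntegral_coe x
  have H := Algebra.discr_mul_isIntegral_mem_adjoin ℚ hint hz
  rw [discrθ θ hθ hgen, pbOf_gen] at H
  have Hmem : algebraMap (𝓞 K) K ((108 : 𝓞 K) * x) ∈
      Algebra.adjoin ℤ ({algebraMap (𝓞 K) K θ} : Set K) := by
    have : -((-108 : ℚ) • algebraMap (𝓞 K) K x) =
        algebraMap (𝓞 K) K ((108 : 𝓞 K) * x) := by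
      rw [Algebra.smul_def, map_mul, map_ofNat,
        show ((-108:ℚ)) = -(108:ℚ) by norm_num, map_neg, map_ofNat]
      ring
    rw [← this]
    exact neg_mem H
  rw [show ({algebraMap (𝓞 K) K θ} : Set K) =
        (IsScalarTower.toAlgHom ℤ (𝓞 K) K) '' ({θ} : Set (𝓞 K)) by simp,
      ← AlgHom.map_adjoin] at Hmem
  obtain ⟨w, hw, hweq⟩ := Hmem
  have : w = (108 : 𝓞 K) * x := RingOfIntegers.coe_injective hweq
  rwa [← this]

lemma congrInt (n : ℤ) {z : 𝓞 K} (hz : z ∈ Algebra.adjoin ℤ ({θ} : Set (𝓞 K))) :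
    ∃ c : ℤ, z - (c : 𝓞 K) ∈ Ideal.span {(n : 𝓞 K) - θ} := by
  induction hz using Algebra.adjoin_induction with
  | mem x hx =>
    rw [Set.mem_singleton_iff] at hx
    refine ⟨n, ?_⟩
    have hmem : (n : 𝓞 K) - x ∈ Ideal.span {(n : 𝓞 K) - θ} := by
      rw [hx]; exact Ideal.subset_span (Set.mem_singleton _)
    have := Ideal.mul_mem_left _ (-1) hmem
    convert this using 1
    ring
  | algebraMap r =>
    exact ⟨r, by simp⟩
  | add x y hx hy ihx ihy =>
    obtain ⟨c, hc⟩ := ihx; obtain ⟨d, hd⟩ := ihy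
    refine ⟨c + d, ?_⟩
    have := add_mem hc hd
    convert this using 1
    push_cast
    ring
  | mul x y hx hy ihx ihy =>
    obtain ⟨c, hc⟩ := ihx; obtain ⟨d, hd⟩ := ihy
    refine ⟨c * d, ?_⟩
    have h1 : x * y - (c * d : ℤ) = x * (y - (d:𝓞 K)) + (d : 𝓞 K) * (x - (c:𝓞 K)) := by
      push_cast; ring
    rw [h1]
    exact add_mem (Ideal.mul_mem_left _ _ hd) (Ideal.mul_mem_left _ _ hc)

include hθ hgen in
lemma primeData {P : Ideal (𝓞 K)} (hP : P.IsPrime) (hPbot : P ≠ ⊥) (n : ℤ)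
    (hmem : (n : 𝓞 K) - θ ∈ P) :
    ∃ g : ℤ, Prime g ∧ Ideal.comap (algebraMap ℤ (𝓞 K)) P = Ideal.span {g} ∧
      ((g : 𝓞 K) ∈ P) ∧
      (∃ k, k ≠ 0 ∧ k ≤ 3 ∧ Ideal.absNorm P = g.natAbs ^ k) ∧ g ∣ n ^ 3 - 2 := by
  have hPtop : P ≠ ⊤ := hP.ne_top
  set c : Ideal ℤ := Ideal.comap (algebraMap ℤ (𝓞 K)) P with hc
  have hcprime : c.IsPrime := Ideal.IsPrime.comap _
  have hg : Ideal.span {Submodule.IsPrincipal.generator c} = c :=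
    Ideal.span_singleton_generator c
  set g : ℤ := Submodule.IsPrincipal.generator c with hgdef
  have haP : ((Ideal.absNorm P : ℤ)) ∈ c := by
    rw [hc, Ideal.mem_comap, eq_intCast]
    exact_mod_cast Ideal.absNorm_mem P
  have hN0 : Ideal.absNorm P ≠ 0 := by
    rw [ne_eq, Ideal.absNorm_eq_zero_iff]; exact hPbot
  have hg0 : g ≠ 0 := by
    rintro h
    rw [← hg, h, Ideal.span_singleton_eq_bot.mpr rfl] at haP
    simp only [Ideal.mem_bot] at haP
    exact hN0 (by exact_mod_cast haP)
  have hgprime : Prime g := by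
    rw [← hg] at hcprime
    exact (Ideal.span_singleton_prime hg0).mp hcprime
  have hgP : (g : 𝓞 K) ∈ P := by
    have : g ∈ c := by rw [← hg]; exact Ideal.subset_span (Set.mem_singleton _)
    rw [hc, Ideal.mem_comap, eq_intCast] at this
    exact this
  have hgnat : Nat.Prime g.natAbs := Int.prime_iff_natAbs_prime.mp hgprime
  have hfin3 : Module.finrank ℤ (𝓞 K) = 3 := by
    rw [RingOfIntegers.rank, finrankK _ (coe3 θ hθ) hgen]
  have hnormg : Ideal.absNorm (Ideal.span {(g : 𝓞 K)}) = g.natAbs ^ 3 := by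
    rw [Ideal.absNorm_span_singleton]
    have : (g : 𝓞 K) = algebraMap ℤ (𝓞 K) g := by rw [eq_intCast]
    rw [this, Algebra.norm_algebraMap_of_basis (RingOfIntegers.basis K),
      ← Module.finrank_eq_card_chooseBasisIndex, hfin3, Int.natAbs_pow]
  have hPd : P ∣ Ideal.span {(g : 𝓞 K)} := by
    rw [Ideal.dvd_iff_le, Ideal.span_le, Set.singleton_subset_iff]
    exact hgP
  have h1 : Ideal.absNorm P ∣ g.natAbs ^ 3 := by
    have := map_dvd Ideal.absNorm hPd
    rwa [hnormg] at this
  obtain ⟨k, hk3, hk⟩ := (Nat.dvd_prime_pow hgnat).mp h1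
  have hk0 : k ≠ 0 := by
    rintro rfl
    rw [pow_zero, Ideal.absNorm_eq_one_iff] at hk
    exact hPtop hk
  refine ⟨g, hgprime, hg.symm, hgP, ⟨k, hk0, hk3, hk⟩, ?_⟩
  have h2 : ((n^3 - 2 : ℤ) : 𝓞 K) ∈ P := by
    have hmul : ((n^3 - 2 : ℤ) : 𝓞 K) =
        ((n : 𝓞 K) - θ) * ((n : 𝓞 K)^2 + (n : 𝓞 K)*θ + θ^2) := by
      push_cast
      linear_combination hθ
    rw [hmul]
    exact Ideal.mul_mem_right _ _ hmem
  have h3 : (n^3 - 2 : ℤ) ∈ c := by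
    rw [hc, Ideal.mem_comap, eq_intCast]
    exact h2
  rw [← hg] at h3
  exact Ideal.mem_span_singleton.mp h3

include hθ hgen in
lemma absNormConst (m : ℤ) : Ideal.absNorm (Ideal.span {(m : 𝓞 K)}) = m.natAbs ^ 3 := by
  rw [Ideal.absNorm_span_singleton]
  have h : (m : 𝓞 K) = algebraMap ℤ (𝓞 K) m := (eq_intCast _ m).symm
  rw [h, Algebra.norm_algebraMap_of_basis (RingOfIntegers.basis K),
    ← Module.finrank_eq_card_chooseBasisIndex, RingOfIntegers.rank,
    finrankK _ (coe3 θ hθ) hgen, Int.natAbs_pow]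

end

lemma three_dvd_add_one (n : ℤ) (h : (3:ℤ) ∣ n^3 - 2) : (3:ℤ) ∣ n + 1 := by
  obtain ⟨k, r, hr0, hr2, rfl⟩ : ∃ k r : ℤ, 0 ≤ r ∧ r < 3 ∧ n = 3*k + r :=
    ⟨n / 3, n % 3, Int.emod_nonneg n (by norm_num), by omega, by omega⟩
  have hexp : (3*k + r)^3 - 2 = 27*k^3 + 27*k^2*r + 9*k*r^2 + r^3 - 2 := by ring
  rw [hexp] at h
  interval_cases r <;> omega

lemma not_four_dvd (n : ℤ) : ¬ (4:ℤ) ∣ n^3 - 2 := by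
  obtain ⟨k, r, hr0, hr2, rfl⟩ : ∃ k r : ℤ, 0 ≤ r ∧ r < 2 ∧ n = 2*k + r :=
    ⟨n / 2, n % 2, Int.emod_nonneg n (by norm_num), by omega, by omega⟩
  have hexp : (2*k + r)^3 - 2 = 8*k^3 + 12*k^2*r + 6*k*r^2 + r^3 - 2 := by ring
  rw [hexp]
  interval_cases r <;> omega

lemma not_nine_dvd (n : ℤ) : ¬ (9:ℤ) ∣ n^3 - 2 := by
  obtain ⟨k, r, hr0, hr2, rfl⟩ : ∃ k r : ℤ, 0 ≤ r ∧ r < 3 ∧ n = 3*k + r :=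
    ⟨n / 3, n % 3, Int.emod_nonneg n (by norm_num), by omega, by omega⟩
  have hexp : (3*k + r)^3 - 2 = 27*k^3 + 27*k^2*r + 9*k*r^2 + r^3 - 2 := by ring
  rw [hexp]
  interval_cases r <;> omega

/-- Let `θ` be the (real) cube root of `2`, `K = ℚ(θ)`, and `O_K` its
ring of integers.  Let `I` be a nonzero ideal of `O_K` such that `n ≡ θ (mod I)` is
solvable with a rational integer `n`.  Then `I` is not divisible by two distinct prime
ideals of the same absolute norm; moreover `P₂² ∤ I` and `P₃² ∤ I`, where `P₂` and `P₃`
are the (unique) prime ideals above `2` and `3` respectively. -/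
theorem no_repeated_norms_and_no_ramified_squares
    (K : Type*) [Field K] [NumberField K]
    (θ : NumberField.RingOfIntegers K) (hθ : θ ^ 3 = 2)
    (hgen : Algebra.adjoin ℚ {(θ : K)} = ⊤)
    (I : Ideal (NumberField.RingOfIntegers K)) (hI : I ≠ ⊥)
    (hsolv : ∃ n : ℤ, (n : NumberField.RingOfIntegers K) - θ ∈ I)
    (P₂ P₃ : Ideal (NumberField.RingOfIntegers K))
    (hP₂ : P₂.IsPrime) (hP₂mem : (2 : NumberField.RingOfIntegers K) ∈ P₂)
    (hP₃ : P₃.IsPrime) (hP₃mem : (3 : NumberField.RingOfIntegers K) ∈ P₃) :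
    (∀ P Q : Ideal (NumberField.RingOfIntegers K), P.IsPrime → Q.IsPrime →
        P ∣ I → Q ∣ I → Ideal.absNorm P = Ideal.absNorm Q → P = Q) ∧
      ¬ (P₂ ^ 2 ∣ I) ∧ ¬ (P₃ ^ 2 ∣ I) := by
  obtain ⟨n, hn⟩ := hsolv
  have key : ∀ P : Ideal (𝓞 K), P.IsPrime → ∀ s : 𝓞 K, s ∈ P →
      Nat.Prime (Ideal.absNorm (Ideal.span {s})) → P = Ideal.span {s} := by
    intro P hP s hs hprime
    have hirr : Irreducible (Ideal.absNorm (Ideal.span {s})) := hprime.prime.irreducible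
    have hsP : (Ideal.span ({s} : Set (𝓞 K))).IsPrime :=
      Ideal.isPrime_of_irreducible_absNorm hirr
    have hsbot : Ideal.span ({s} : Set (𝓞 K)) ≠ ⊥ := by
      intro hb
      rw [hb, Ideal.absNorm_eq_zero_iff.mpr rfl] at hprime
      exact Nat.not_prime_zero hprime
    have hmax : (Ideal.span ({s} : Set (𝓞 K))).IsMaximal := hsP.isMaximal hsbot
    exact (hmax.eq_of_le hP.ne_top
      (by rwa [Ideal.span_le, Set.singleton_subset_iff])).symm
  have habs2 : Ideal.absNorm (Ideal.span {θ}) = 2 := by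
    have h0 := absNormSpan θ hθ hgen 0
    rw [show ((0:ℤ) : 𝓞 K) - θ = -θ by push_cast; ring,
      Ideal.span_singleton_neg] at h0
    exact h0.trans (by norm_num)
  have habs3 : Ideal.absNorm (Ideal.span {θ + 1}) = 3 := by
    have h0 := absNormSpan θ hθ hgen (-1)
    rw [show ((-1:ℤ) : 𝓞 K) - θ = -(θ + 1) by push_cast; ring,
      Ideal.span_singleton_neg] at h0
    exact h0.trans (by norm_num)
  refine ⟨?_, ?_, ?_⟩
  · -- claim 1
    intro P Q hP hQ hPI hQI hnormeq
    have hPbot : P ≠ ⊥ := by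
      rintro rfl
      rw [← Ideal.zero_eq_bot] at hPI
      exact hI (by rw [← Ideal.zero_eq_bot]; exact zero_dvd_iff.mp hPI)
    have hQbot : Q ≠ ⊥ := by
      rintro rfl
      rw [← Ideal.zero_eq_bot] at hQI
      exact hI (by rw [← Ideal.zero_eq_bot]; exact zero_dvd_iff.mp hQI)
    have hnP : (n : 𝓞 K) - θ ∈ P := (Ideal.le_of_dvd hPI) hn
    have hnQ : (n : 𝓞 K) - θ ∈ Q := (Ideal.le_of_dvd hQI) hn
    obtain ⟨gP, hgPp, hgPc, hgPm, ⟨kP, hkP0, _, hkP⟩, hgPd⟩ :=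
      primeData θ hθ hgen hP hPbot n hnP
    obtain ⟨gQ, hgQp, hgQc, hgQm, ⟨kQ, hkQ0, _, hkQ⟩, hgQd⟩ :=
      primeData θ hθ hgen hQ hQbot n hnQ
    have hgPnat : Nat.Prime gP.natAbs := Int.prime_iff_natAbs_prime.mp hgPp
    have hgQnat : Nat.Prime gQ.natAbs := Int.prime_iff_natAbs_prime.mp hgQp
    have hpq : gQ.natAbs = gP.natAbs := by
      have hpow : gP.natAbs ^ kP = gQ.natAbs ^ kQ := by rw [← hkP, ← hkQ, hnormeq]
      have h1 : gQ.natAbs ∣ gP.natAbs ^ kP := by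
        rw [hpow]; exact dvd_pow_self _ hkQ0
      exact (Nat.prime_dvd_prime_iff_eq hgQnat hgPnat).mp (hgQnat.dvd_of_dvd_pow h1)
    have hpP : ((gP.natAbs : ℤ) : 𝓞 K) ∈ P := by
      rcases Int.natAbs_eq gP with h | h
      · rw [← h]; exact hgPm
      · have h' : ((gP.natAbs : ℤ) : 𝓞 K) = -(gP : 𝓞 K) := by
          rw [show ((gP.natAbs : ℤ)) = -gP from by linarith [h]]
          push_cast; ring
        rw [h']
        exact Submodule.neg_mem _ hgPm
    have hpQ : ((gP.natAbs : ℤ) : 𝓞 K) ∈ Q := by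
      rw [← hpq]
      rcases Int.natAbs_eq gQ with h | h
      · rw [← h]; exact hgQm
      · have h' : ((gQ.natAbs : ℤ) : 𝓞 K) = -(gQ : 𝓞 K) := by
          rw [show ((gQ.natAbs : ℤ)) = -gQ from by linarith [h]]
          push_cast; ring
        rw [h']
        exact Submodule.neg_mem _ hgQm
    rcases eq_or_ne gP.natAbs 2 with hp2 | hp2
    · -- p = 2
      have h2P : (2 : 𝓞 K) ∈ P := by
        have h := hpP; rw [hp2] at h; exact_mod_cast h
      have h2Q : (2 : 𝓞 K) ∈ Q := by
        have h := hpQ; rw [hp2] at h; exact_mod_cast h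
      have hθP : θ ∈ P := hP.mem_of_pow_mem 3 (by rw [hθ]; exact h2P)
      have hθQ : θ ∈ Q := hQ.mem_of_pow_mem 3 (by rw [hθ]; exact h2Q)
      rw [key P hP θ hθP (by rw [habs2]; exact Nat.prime_two),
        key Q hQ θ hθQ (by rw [habs2]; exact Nat.prime_two)]
    rcases eq_or_ne gP.natAbs 3 with hp3 | hp3
    · -- p = 3
      have h3dvd : (3:ℤ) ∣ n^3 - 2 := by
        have h := Int.natAbs_dvd.mpr hgPd
        rw [hp3] at h
        exact_mod_cast h
      obtain ⟨m, hm⟩ := three_dvd_add_one n h3dvd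
      have h3P : (3 : 𝓞 K) ∈ P := by
        have h := hpP; rw [hp3] at h; exact_mod_cast h
      have h3Q : (3 : 𝓞 K) ∈ Q := by
        have h := hpQ; rw [hp3] at h; exact_mod_cast h
      have hθ1P : θ + 1 ∈ P := by
        have h1 : ((n + 1 : ℤ) : 𝓞 K) ∈ P := by
          rw [hm]; push_cast
          exact Ideal.mul_mem_right _ _ h3P
        have h2 : θ + 1 = -((n : 𝓞 K) - θ) + ((n + 1 : ℤ) : 𝓞 K) := by
          push_cast; ring
        rw [h2]; exact add_mem (Submodule.neg_mem _ hnP) h1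
      have hθ1Q : θ + 1 ∈ Q := by
        have h1 : ((n + 1 : ℤ) : 𝓞 K) ∈ Q := by
          rw [hm]; push_cast
          exact Ideal.mul_mem_right _ _ h3Q
        have h2 : θ + 1 = -((n : 𝓞 K) - θ) + ((n + 1 : ℤ) : 𝓞 K) := by
          push_cast; ring
        rw [h2]; exact add_mem (Submodule.neg_mem _ hnQ) h1
      rw [key P hP (θ + 1) hθ1P (by rw [habs3]; exact Nat.prime_three),
        key Q hQ (θ + 1) hθ1Q (by rw [habs3]; exact Nat.prime_three)]
    · -- p coprime to 6
      have hPmax : P.IsMaximal := hP.isMaximal hPbot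
      have hQmax : Q.IsMaximal := hQ.isMaximal hQbot
      by_contra hne
      have hsup : P ⊔ Q = ⊤ := Ideal.IsMaximal.coprime_of_ne hPmax hQmax hne
      have hone : (1 : 𝓞 K) ∈ P ⊔ Q := by rw [hsup]; trivial
      obtain ⟨x, hxP, y, hyQ, hxy⟩ := Submodule.mem_sup.mp hone
      have hp108 : Nat.Coprime gP.natAbs 108 := by
        refine hgPnat.coprime_iff_not_dvd.mpr ?_
        intro hdvd
        have h4 : gP.natAbs ∣ 2^2 * 3^3 := by norm_num; exact hdvd
        rcases (Nat.Prime.dvd_mul hgPnat).mp h4 with h | h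
        · exact hp2 ((Nat.prime_dvd_prime_iff_eq hgPnat Nat.prime_two).mp
            (hgPnat.dvd_of_dvd_pow h))
        · exact hp3 ((Nat.prime_dvd_prime_iff_eq hgPnat Nat.prime_three).mp
            (hgPnat.dvd_of_dvd_pow h))
      have hcopZ : IsCoprime (108 : ℤ) ((gP.natAbs : ℤ)) := by
        rw [Int.isCoprime_iff_gcd_eq_one]
        have : ((108 : ℕ) : ℤ) = (108 : ℤ) := by norm_num
        rw [← this, Int.gcd_natCast_natCast]
        exact hp108.symm
      obtain ⟨u, v, huv⟩ := hcopZ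
      set z : 𝓞 K := (u : 𝓞 K) * ((108 : 𝓞 K) * x) with hzdef
      have hzadj : z ∈ Algebra.adjoin ℤ ({θ} : Set (𝓞 K)) := by
        rw [hzdef, show ((u : ℤ) : 𝓞 K) = algebraMap ℤ _ u from (eq_intCast _ u).symm]
        exact Subalgebra.mul_mem _ (Subalgebra.algebraMap_mem _ u) (mem108 θ hθ hgen x)
      obtain ⟨c, hc⟩ := congrInt θ n hzadj
      have hcast : (u : 𝓞 K) * 108 + (v : 𝓞 K) * ((gP.natAbs : ℤ) : 𝓞 K) = 1 := by
        exact_mod_cast congrArg (fun t : ℤ => (t : 𝓞 K)) huv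
      have hzx : z - x = -((v : 𝓞 K) * (((gP.natAbs : ℤ)) : 𝓞 K) * x) := by
        rw [hzdef]
        linear_combination x * hcast
      have hzxP : z - x ∈ P := by
        rw [hzx]
        exact Submodule.neg_mem _ (Ideal.mul_mem_right _ _ (Ideal.mul_mem_left _ _ hpP))
      have hzxQ : z - x ∈ Q := by
        rw [hzx]
        exact Submodule.neg_mem _ (Ideal.mul_mem_right _ _ (Ideal.mul_mem_left _ _ hpQ))
      have hspanP : Ideal.span {(n : 𝓞 K) - θ} ≤ P := by
        rw [Ideal.span_le, Set.singleton_subset_iff]; exact hnP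
      have hspanQ : Ideal.span {(n : 𝓞 K) - θ} ≤ Q := by
        rw [Ideal.span_le, Set.singleton_subset_iff]; exact hnQ
      have hcP : ((c : ℤ) : 𝓞 K) ∈ P := by
        have hzP : z ∈ P := by
          have h := add_mem hzxP hxP
          rwa [sub_add_cancel] at h
        have h2 : ((c : ℤ) : 𝓞 K) = z - (z - (c : 𝓞 K)) := by ring
        rw [h2]; exact sub_mem hzP (hspanP hc)
      have hcQ : ((c - 1 : ℤ) : 𝓞 K) ∈ Q := by
        have hz1Q : z - 1 ∈ Q := by
          have h2 : z - 1 = (z - x) - y := by rw [← hxy]; ring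
          rw [h2]; exact sub_mem hzxQ hyQ
        have h2 : ((c - 1 : ℤ) : 𝓞 K) = (z - 1) - (z - (c : 𝓞 K)) := by
          push_cast; ring
        rw [h2]; exact sub_mem hz1Q (hspanQ hc)
      have hdvd1 : gP ∣ c := by
        have h : (c : ℤ) ∈ Ideal.comap (algebraMap ℤ (𝓞 K)) P := by
          rw [Ideal.mem_comap, eq_intCast]; exact hcP
        rw [hgPc] at h
        exact Ideal.mem_span_singleton.mp h
      have hdvd2 : gQ ∣ c - 1 := by
        have h : (c - 1 : ℤ) ∈ Ideal.comap (algebraMap ℤ (𝓞 K)) Q := by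
          rw [Ideal.mem_comap, eq_intCast]; exact hcQ
        rw [hgQc] at h
        exact Ideal.mem_span_singleton.mp h
      have hd1 : ((gP.natAbs : ℤ)) ∣ c := Int.natAbs_dvd.mpr hdvd1
      have hd2 : ((gP.natAbs : ℤ)) ∣ c - 1 := by
        rw [← hpq]; exact Int.natAbs_dvd.mpr hdvd2
      have hone' : ((gP.natAbs : ℤ)) ∣ 1 := by
        have h := dvd_sub hd1 hd2
        simpa using h
      have hle := Int.le_of_dvd one_pos hone'
      have := hgPnat.two_le
      omega
  · -- P₂² ∤ I
    intro hdvd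
    have hle : I ≤ P₂ ^ 2 := Ideal.le_of_dvd hdvd
    have hsp : P₂ ^ 2 ∣ Ideal.span {(n : 𝓞 K) - θ} := by
      rw [Ideal.dvd_iff_le, Ideal.span_le, Set.singleton_subset_iff]
      exact hle hn
    have h1 : (Ideal.absNorm P₂) ^ 2 ∣ (n^3 - 2).natAbs := by
      have h := map_dvd Ideal.absNorm hsp
      rwa [map_pow, absNormSpan θ hθ hgen n] at h
    have h2 : Ideal.absNorm P₂ ∣ 2 ^ 3 := by
      have hPd : P₂ ∣ Ideal.span {((2:ℤ) : 𝓞 K)} := by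
        rw [Ideal.dvd_iff_le, Ideal.span_le, Set.singleton_subset_iff]
        exact_mod_cast hP₂mem
      have h := map_dvd Ideal.absNorm hPd
      rwa [absNormConst θ hθ hgen 2] at h
    obtain ⟨k, hk3, hk⟩ := (Nat.dvd_prime_pow Nat.prime_two).mp h2
    have hk0 : k ≠ 0 := by
      rintro rfl
      rw [pow_zero, Ideal.absNorm_eq_one_iff] at hk
      exact hP₂.ne_top hk
    have h4 : (2^2 : ℕ) ∣ (n^3 - 2).natAbs := by
      refine dvd_trans ?_ h1
      rw [hk, ← pow_mul]
      exact pow_dvd_pow 2 (by omega)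
    have h5 : (4 : ℤ) ∣ n^3 - 2 := by
      have h6 : ((2^2 : ℕ) : ℤ) ∣ ((n^3 - 2).natAbs : ℤ) := Int.natCast_dvd_natCast.mpr h4
      have h7 : ((n^3 - 2).natAbs : ℤ) ∣ n^3 - 2 := Int.natAbs_dvd.mpr dvd_rfl
      have := dvd_trans h6 h7
      norm_num at this
      exact this
    exact not_four_dvd n h5
  · -- P₃² ∤ I
    intro hdvd
    have hle : I ≤ P₃ ^ 2 := Ideal.le_of_dvd hdvd
    have hsp : P₃ ^ 2 ∣ Ideal.span {(n : 𝓞 K) - θ} := by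
      rw [Ideal.dvd_iff_le, Ideal.span_le, Set.singleton_subset_iff]
      exact hle hn
    have h1 : (Ideal.absNorm P₃) ^ 2 ∣ (n^3 - 2).natAbs := by
      have h := map_dvd Ideal.absNorm hsp
      rwa [map_pow, absNormSpan θ hθ hgen n] at h
    have h2 : Ideal.absNorm P₃ ∣ 3 ^ 3 := by
      have hPd : P₃ ∣ Ideal.span {((3:ℤ) : 𝓞 K)} := by
        rw [Ideal.dvd_iff_le, Ideal.span_le, Set.singleton_subset_iff]
        exact_mod_cast hP₃mem
      have h := map_dvd Ideal.absNorm hPd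
      rwa [absNormConst θ hθ hgen 3] at h
    obtain ⟨k, hk3, hk⟩ := (Nat.dvd_prime_pow Nat.prime_three).mp h2
    have hk0 : k ≠ 0 := by
      rintro rfl
      rw [pow_zero, Ideal.absNorm_eq_one_iff] at hk
      exact hP₃.ne_top hk
    have h4 : (3^2 : ℕ) ∣ (n^3 - 2).natAbs := by
      refine dvd_trans ?_ h1
      rw [hk, ← pow_mul]
      exact pow_dvd_pow 3 (by omega)
    have h5 : (9 : ℤ) ∣ n^3 - 2 := by
      have h6 : ((3^2 : ℕ) : ℤ) ∣ ((n^3 - 2).natAbs : ℤ) := Int.natCast_dvd_natCast.mpr h4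
      have h7 : ((n^3 - 2).natAbs : ℤ) ∣ n^3 - 2 := Int.natAbs_dvd.mpr dvd_rfl
      have := dvd_trans h6 h7
      norm_num at this
      exact this
    exact not_nine_dvd n h5
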